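/- arXiv:0911.3374 — 2 statements merged into one kernel-verified Lean document; each statement's English description precedes it below -/
import Mathlib

section
/- (Discrete nabla fractional Poincaré inequality.) Let μ > 0 be non-integer with m = ⌈μ⌉, let p ∈ ℤ₊ with μ > p, and let a ∈ ℤ₊. Let b ∈ ℕ with a + m < b, and let f : [a−m+1, a−m+2, ..., b] → ℝ with ∇^k f(a) = 0 for k = p, ..., m−1. Let γ, δ > 1 with 1/γ + 1/δ = 1. Then Σ_{j=a+m}^{b} |∇^p f(j)|^δ ≤ (1/Γ(μ−p)^δ) · { Σ_{j=a+m}^{b} ( Σ_{τ=a+1}^{j} ( (j−τ+1)^{↑(μ−p−1)} )^γ )^{δ/γ} } · ( Σ_{τ=a+1}^{b} |∇_{(a+1)*}^{μ} f(τ)|^δ ). -/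
open Finset

/-- Backward (nabla) difference: `∇f(t) = f(t) - f(t-1)`. -/
def nabla (f : ℤ → ℝ) : ℤ → ℝ := fun t => f t - f (t - 1)

/-- Rising factorial `t^{↑α} = Γ(t+α)/Γ(t)`. -/
noncomputable def risingFac (t α : ℝ) : ℝ := Real.Gamma (t + α) / Real.Gamma t

/-- The `ν`-th order nabla fractional sum `∇_a^{-ν} f (t) = Σ_{s=a}^{t} (t-s+1)^{↑(ν-1)}/Γ(ν) · f(s)`. -/
noncomputable def fracSum (ν : ℝ) (a : ℤ) (f : ℤ → ℝ) : ℤ → ℝ := fun t =>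
  ∑ s ∈ Finset.Icc a t, risingFac ((t - s + 1 : ℤ) : ℝ) (ν - 1) / Real.Gamma ν * f s

/-- Caputo-like nabla fractional difference `∇_{a*}^{μ} f = ∇_a^{-(m-μ)} (∇^m f)`, `m = ⌈μ⌉`. -/
noncomputable def caputoNabla (μ : ℝ) (a : ℤ) (f : ℤ → ℝ) : ℤ → ℝ :=
  fracSum ((⌈μ⌉₊ : ℝ) - μ) a (nabla^[⌈μ⌉₊] f)

noncomputable def Vk (α : ℝ) (k : ℕ) : ℝ := Real.Gamma (α + k) / (Real.Gamma α * k.factorial)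

lemma Vk_zero (α : ℝ) (hα : 0 < α) : Vk α 0 = 1 := by
  have hΓ : Real.Gamma α ≠ 0 := (Real.Gamma_pos_of_pos hα).ne'
  simp [Vk, hΓ]

lemma Vk_succ_mul (α : ℝ) (hα : 0 < α) (k : ℕ) :
    ((k : ℝ) + 1) * Vk α (k + 1) = α * Vk (α + 1) k := by
  have hΓ : Real.Gamma α ≠ 0 := (Real.Gamma_pos_of_pos hα).ne'
  have h1 : Real.Gamma (α + 1) = α * Real.Gamma α := Real.Gamma_add_one hα.ne'
  have h2 : α + ((k : ℝ) + 1) = α + 1 + k := by ring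
  have hk : (k.factorial : ℝ) ≠ 0 := by exact_mod_cast k.factorial_ne_zero
  unfold Vk
  rw [h1]
  push_cast [Nat.factorial_succ, h2]
  field_simp

lemma vander : ∀ (n : ℕ) (α β : ℝ), 0 < α → 0 < β →
    ∑ k ∈ range (n + 1), Vk α k * Vk β (n - k) = Vk (α + β) n := by
  intro n
  induction n with
  | zero => intro α β hα hβ; simp [Vk_zero _ hα, Vk_zero _ hβ, Vk_zero _ (by linarith : (0:ℝ) < α + β)]
  | succ n ih =>
    intro α β hα hβ
    have hn1 : ((n : ℝ) + 1) ≠ 0 := by positivity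
    have key : ((n : ℝ) + 1) * ∑ k ∈ range (n + 1 + 1), Vk α k * Vk β (n + 1 - k)
        = ((n : ℝ) + 1) * Vk (α + β) (n + 1) := by
      have hsplit : ((n : ℝ) + 1) * ∑ k ∈ range (n + 1 + 1), Vk α k * Vk β (n + 1 - k)
          = (∑ k ∈ range (n + 1 + 1), (k : ℝ) * (Vk α k * Vk β (n + 1 - k)))
            + ∑ k ∈ range (n + 1 + 1), ((n + 1 - k : ℕ) : ℝ) * (Vk α k * Vk β (n + 1 - k)) := by
        rw [mul_sum, ← sum_add_distrib]
        refine sum_congr rfl fun k hk => ?_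
        have hk' : k ≤ n + 1 := by simpa [Nat.lt_succ_iff] using mem_range.mp hk
        have : ((n + 1 - k : ℕ) : ℝ) = (n : ℝ) + 1 - k := by
          push_cast [Nat.cast_sub hk']; ring
        rw [this]; ring
      have hA : (∑ k ∈ range (n + 1 + 1), (k : ℝ) * (Vk α k * Vk β (n + 1 - k)))
          = α * Vk (α + β + 1) n := by
        rw [Finset.sum_range_succ' (fun k => (k : ℝ) * (Vk α k * Vk β (n + 1 - k))) (n + 1)]
        simp only [Nat.cast_zero, zero_mul, add_zero]
        have hterm : ∀ i ∈ range (n + 1), ((i + 1 : ℕ) : ℝ) * (Vk α (i + 1) * Vk β (n + 1 - (i + 1)))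
            = α * (Vk (α + 1) i * Vk β (n - i)) := by
          intro i hi
          have h1 : n + 1 - (i + 1) = n - i := by omega
          have h2 : ((i + 1 : ℕ) : ℝ) = (i : ℝ) + 1 := by push_cast; ring
          rw [h1, h2, show ((i:ℝ)+1) * (Vk α (i+1) * Vk β (n-i)) = (((i:ℝ)+1) * Vk α (i+1)) * Vk β (n-i) by ring,
            Vk_succ_mul α hα i]
          ring
        rw [sum_congr rfl hterm, ← mul_sum, ih (α + 1) β (by linarith) hβ]
        rw [show α + 1 + β = α + β + 1 by ring]
      have hB : (∑ k ∈ range (n + 1 + 1), ((n + 1 - k : ℕ) : ℝ) * (Vk α k * Vk β (n + 1 - k)))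
          = β * Vk (α + β + 1) n := by
        rw [Finset.sum_range_succ]
        simp only [Nat.sub_self, Nat.cast_zero, zero_mul, add_zero]
        have hterm : ∀ k ∈ range (n + 1), ((n + 1 - k : ℕ) : ℝ) * (Vk α k * Vk β (n + 1 - k))
            = β * (Vk α k * Vk (β + 1) (n - k)) := by
          intro k hk
          have hk' : k ≤ n := by simpa [Nat.lt_succ_iff] using mem_range.mp hk
          have h1 : n + 1 - k = (n - k) + 1 := by omega
          rw [h1]
          have h2 : ((n - k + 1 : ℕ) : ℝ) = ((n - k : ℕ) : ℝ) + 1 := by push_cast; ring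
          rw [h2, show (((n-k:ℕ):ℝ)+1) * (Vk α k * Vk β ((n-k)+1)) = Vk α k * ((((n-k:ℕ):ℝ)+1) * Vk β ((n-k)+1)) by ring,
            Vk_succ_mul β hβ (n - k)]
          ring
        rw [sum_congr rfl hterm, ← mul_sum, ih α (β + 1) hα (by linarith)]
        rw [show α + (β + 1) = α + β + 1 by ring]
      rw [hsplit, hA, hB, ← add_mul]
      rw [show ((n:ℝ)+1) * Vk (α+β) (n+1) = (α + β) * Vk (α + β + 1) n from Vk_succ_mul (α+β) (by linarith) n]
    exact mul_left_cancel₀ hn1 key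

lemma rf_div (α : ℝ) (k : ℕ) :
    risingFac ((k : ℝ) + 1) (α - 1) / Real.Gamma α = Vk α k := by
  unfold risingFac Vk
  rw [show (k:ℝ) + 1 + (α - 1) = α + k by ring, Real.Gamma_nat_eq_factorial, div_div,
    mul_comm (k.factorial : ℝ)]

lemma Icc_map (τ t : ℤ) (n : ℕ) (hn : t - τ = n) :
    Icc τ t = Finset.map ⟨fun k : ℕ => τ + k, fun a b h => by simpa using h⟩ (range (n + 1)) := by
  ext x
  simp only [mem_Icc, mem_map, mem_range, Function.Embedding.coeFn_mk]
  constructor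
  · intro hx
    exact ⟨(x - τ).toNat, by omega, by show τ + (((x - τ).toNat : ℕ) : ℤ) = x; omega⟩
  · rintro ⟨k, hk, rfl⟩; show τ ≤ τ + (k : ℤ) ∧ τ + (k : ℤ) ≤ t; omega

lemma conv_kernel (α β : ℝ) (hα : 0 < α) (hβ : 0 < β) (τ t : ℤ) (hτ : τ ≤ t) :
    ∑ s ∈ Icc τ t, risingFac ((t - s + 1 : ℤ) : ℝ) (α - 1) / Real.Gamma α *
      (risingFac ((s - τ + 1 : ℤ) : ℝ) (β - 1) / Real.Gamma β)
    = risingFac ((t - τ + 1 : ℤ) : ℝ) (α + β - 1) / Real.Gamma (α + β) := by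
  obtain ⟨n, hn⟩ : ∃ n : ℕ, t - τ = n := ⟨(t - τ).toNat, by omega⟩
  rw [Icc_map τ t n hn, Finset.sum_map]
  change ∑ k ∈ range (n + 1), risingFac ((t - (τ + k) + 1 : ℤ) : ℝ) (α - 1) / Real.Gamma α *
    (risingFac (((τ + k) - τ + 1 : ℤ) : ℝ) (β - 1) / Real.Gamma β) = _
  have hterm : ∀ k ∈ range (n + 1),
      risingFac ((t - (τ + k) + 1 : ℤ) : ℝ) (α - 1) / Real.Gamma α *
        (risingFac (((τ + k) - τ + 1 : ℤ) : ℝ) (β - 1) / Real.Gamma β)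
      = Vk β k * Vk α (n - k) := by
    intro k hk
    have hk' : k ≤ n := by simpa [Nat.lt_succ_iff] using mem_range.mp hk
    have e1 : ((t - (τ + k) + 1 : ℤ) : ℝ) = ((n - k : ℕ) : ℝ) + 1 := by
      have : (t - (τ + k) + 1 : ℤ) = ((n - k : ℕ) : ℤ) + 1 := by omega
      rw [this]; push_cast; ring
    have e2 : (((τ + k) - τ + 1 : ℤ) : ℝ) = (k : ℝ) + 1 := by push_cast; ring
    rw [e1, e2, rf_div α (n - k), rf_div β k]
    ring
  rw [sum_congr rfl hterm, vander n β α hβ hα]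
  have e3 : ((t - τ + 1 : ℤ) : ℝ) = (n : ℝ) + 1 := by rw [hn]; push_cast; ring
  rw [e3, show β + α = α + β by ring, rf_div (α + β) n]

lemma fracSum_comp (α β : ℝ) (hα : 0 < α) (hβ : 0 < β) (c : ℤ) (h : ℤ → ℝ) (t : ℤ) :
    fracSum α c (fracSum β c h) t = fracSum (α + β) c h t := by
  unfold fracSum
  have swap : ∑ s ∈ Icc c t, ∑ u ∈ Icc c s,
        risingFac ((t - s + 1 : ℤ) : ℝ) (α - 1) / Real.Gamma α *
          (risingFac ((s - u + 1 : ℤ) : ℝ) (β - 1) / Real.Gamma β * h u)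
      = ∑ u ∈ Icc c t, ∑ s ∈ Icc u t,
        risingFac ((t - s + 1 : ℤ) : ℝ) (α - 1) / Real.Gamma α *
          (risingFac ((s - u + 1 : ℤ) : ℝ) (β - 1) / Real.Gamma β * h u) := by
    apply Finset.sum_comm'
    intro s u
    simp only [mem_Icc]
    omega
  calc ∑ s ∈ Icc c t, risingFac ((t - s + 1 : ℤ) : ℝ) (α - 1) / Real.Gamma α *
          ∑ u ∈ Icc c s, risingFac ((s - u + 1 : ℤ) : ℝ) (β - 1) / Real.Gamma β * h u
      = ∑ u ∈ Icc c t, ∑ s ∈ Icc u t,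
          risingFac ((t - s + 1 : ℤ) : ℝ) (α - 1) / Real.Gamma α *
            (risingFac ((s - u + 1 : ℤ) : ℝ) (β - 1) / Real.Gamma β * h u) := by
        rw [← swap]; exact sum_congr rfl fun s _ => by rw [mul_sum]
    _ = ∑ u ∈ Icc c t, risingFac ((t - u + 1 : ℤ) : ℝ) (α + β - 1) / Real.Gamma (α + β) * h u := by
        refine sum_congr rfl fun u hu => ?_
        have hu' : u ≤ t := (mem_Icc.mp hu).2
        calc ∑ s ∈ Icc u t, risingFac ((t - s + 1 : ℤ) : ℝ) (α - 1) / Real.Gamma α *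
                (risingFac ((s - u + 1 : ℤ) : ℝ) (β - 1) / Real.Gamma β * h u)
            = (∑ s ∈ Icc u t, risingFac ((t - s + 1 : ℤ) : ℝ) (α - 1) / Real.Gamma α *
                (risingFac ((s - u + 1 : ℤ) : ℝ) (β - 1) / Real.Gamma β)) * h u := by
              rw [sum_mul]; exact sum_congr rfl fun s _ => by ring
          _ = _ := by rw [conv_kernel α β hα hβ u t hu']

lemma fracSum_one_nabla (c : ℤ) (h : ℤ → ℝ) : ∀ t : ℤ, c - 1 ≤ t →
    fracSum 1 c (nabla h) t = h t - h (c - 1) := by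
  intro t
  refine Int.le_induction (motive := fun t _ => fracSum 1 c (nabla h) t = h t - h (c - 1)) ?_ ?_ t
  · show fracSum 1 c (nabla h) (c-1) = _
    unfold fracSum
    rw [show Icc c (c - 1) = ∅ from Finset.Icc_eq_empty (by omega)]
    simp
  · intro t ht ih
    show fracSum 1 c (nabla h) (t+1) = _
    unfold fracSum at *
    rw [show Icc c (t + 1) = insert (t + 1) (Icc c t) from ?_]
    · rw [Finset.sum_insert (by simp)]
      have e : ∀ s ∈ Icc c t,
          risingFac ((t + 1 - s + 1 : ℤ) : ℝ) (1 - 1) / Real.Gamma 1 * nabla h s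
          = risingFac ((t - s + 1 : ℤ) : ℝ) (1 - 1) / Real.Gamma 1 * nabla h s := by
        intro s hs
        have hs' : s ≤ t := (mem_Icc.mp hs).2
        have r1 : risingFac ((t + 1 - s + 1 : ℤ) : ℝ) 0 = 1 := by
          unfold risingFac
          rw [add_zero, div_self]
          have : (0:ℤ) < t + 1 - s + 1 := by omega
          exact (Real.Gamma_pos_of_pos (by exact_mod_cast this)).ne'
        have r2 : risingFac ((t - s + 1 : ℤ) : ℝ) 0 = 1 := by
          unfold risingFac
          rw [add_zero, div_self]
          have : (0:ℤ) < t - s + 1 := by omega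
          exact (Real.Gamma_pos_of_pos (by exact_mod_cast this)).ne'
        rw [show (1:ℝ) - 1 = 0 by ring, r1, r2]
      rw [sum_congr rfl e, ih]
      have r3 : risingFac ((t + 1 - (t + 1) + 1 : ℤ) : ℝ) (1 - 1) = 1 := by
        unfold risingFac
        norm_num [Real.Gamma_one]
      rw [r3, Real.Gamma_one]
      unfold nabla
      ring
    · ext x; simp only [mem_Icc, mem_insert]; omega

lemma fracSum_congr (ν : ℝ) (c : ℤ) (g₁ g₂ : ℤ → ℝ) (t : ℤ)
    (h : ∀ s, c ≤ s → s ≤ t → g₁ s = g₂ s) :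
    fracSum ν c g₁ t = fracSum ν c g₂ t := by
  unfold fracSum
  refine sum_congr rfl fun s hs => ?_
  rw [h s (mem_Icc.mp hs).1 (mem_Icc.mp hs).2]

lemma taylor (c : ℤ) : ∀ (r : ℕ), 1 ≤ r → ∀ (h : ℤ → ℝ),
    (∀ i, i < r → nabla^[i] h (c - 1) = 0) → ∀ t, c - 1 ≤ t →
    fracSum (r : ℝ) c (nabla^[r] h) t = h t := by
  intro r
  induction r with
  | zero => omega
  | succ r ih =>
    intro _ h hz t ht
    rcases Nat.eq_or_lt_of_le (Nat.one_le_iff_ne_zero.mpr (Nat.succ_ne_zero r)) with h1 | h1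
    · -- r + 1 = 1, i.e. r = 0
      have hr : r = 0 := by omega
      subst hr
      have h0 : h (c - 1) = 0 := by simpa using hz 0 (by omega)
      have h2 := fracSum_one_nabla c h t ht
      rw [h0, sub_zero] at h2
      simpa using h2
    · have hr : 1 ≤ r := by omega
      have step : fracSum ((r : ℝ) + 1) c (nabla^[r + 1] h) t
          = fracSum (r : ℝ) c (fracSum 1 c (nabla (nabla^[r] h))) t := by
        rw [fracSum_comp (r : ℝ) 1 (by exact_mod_cast hr) one_pos c _ t]
        congr 1
        funext s
        rw [Function.iterate_succ_apply' nabla r h]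
      push_cast
      rw [step]
      rw [fracSum_congr (r : ℝ) c _ (nabla^[r] h) t (fun s hs hst => by
        rw [fracSum_one_nabla c (nabla^[r] h) s (by omega), hz r (by omega), sub_zero])]
      exact ih hr h (fun i hi => hz i (by omega)) t ht

lemma representation (μ : ℝ) (hμ : 0 < μ) (hμm : μ < ⌈μ⌉₊)
    (p : ℕ) (hp : (p : ℝ) < μ) (a : ℤ)
    (f : ℤ → ℝ)
    (hf0 : ∀ k, p ≤ k → k ≤ ⌈μ⌉₊ - 1 → nabla^[k] f a = 0) :
    ∀ t, a ≤ t → nabla^[p] f t = fracSum (μ - p) (a+1) (caputoNabla μ (a+1) f) t := by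
  intro t ht
  have hpm : p < ⌈μ⌉₊ := by exact_mod_cast hp.trans hμm
  have e1 : fracSum (μ - p) (a+1) (caputoNabla μ (a+1) f) t
      = fracSum ((μ - p) + ((⌈μ⌉₊ : ℝ) - μ)) (a+1) (nabla^[⌈μ⌉₊] f) t := by
    unfold caputoNabla
    exact fracSum_comp (μ - p) ((⌈μ⌉₊ : ℝ) - μ) (by linarith) (by linarith) (a+1) _ t
  have e2 : (μ - p) + ((⌈μ⌉₊ : ℝ) - μ) = ((⌈μ⌉₊ - p : ℕ) : ℝ) := by
    rw [Nat.cast_sub hpm.le]; ring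
  have e3 : nabla^[⌈μ⌉₊] f = nabla^[⌈μ⌉₊ - p] (nabla^[p] f) := by
    rw [← Function.iterate_add_apply]
    congr 1
    omega
  rw [e1, e2, e3]
  refine (taylor (a+1) (⌈μ⌉₊ - p) (by omega) (nabla^[p] f) (fun i hi => ?_) t (by omega)).symm
  rw [show a + 1 - 1 = a by ring, ← Function.iterate_add_apply]
  exact hf0 (i + p) (by omega) (by omega)

lemma rf_pos {ν : ℝ} (hν : 0 < ν) {τ t : ℤ} (hτ : τ ≤ t) :
    0 < risingFac ((t - τ + 1 : ℤ) : ℝ) (ν - 1) := by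
  unfold risingFac
  apply div_pos
  · apply Real.Gamma_pos_of_pos
    have h1 : (0:ℝ) ≤ ((t - τ : ℤ) : ℝ) := by exact_mod_cast (by omega : (0:ℤ) ≤ t - τ)
    have : ((t - τ + 1 : ℤ) : ℝ) = ((t - τ : ℤ) : ℝ) + 1 := by push_cast; ring
    rw [this]
    linarith
  · apply Real.Gamma_pos_of_pos
    have : (0:ℤ) < t - τ + 1 := by omega
    exact_mod_cast this


/-- Discrete nabla fractional Poincaré inequality. -/
theorem discrete_nabla_fractional_poincare
    (μ : ℝ) (hμ : 0 < μ) (hμint : ∀ n : ℤ, μ ≠ n)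
    (m : ℕ) (hm : m = ⌈μ⌉₊)
    (p : ℕ) (hp : (p : ℝ) < μ) (a : ℕ)
    (b : ℤ) (hb : (a : ℤ) + m < b)
    (f : ℤ → ℝ)
    (hf0 : ∀ k, p ≤ k → k ≤ m - 1 → nabla^[k] f a = 0)
    (γ δ : ℝ) (hγ : 1 < γ) (hδ : 1 < δ) (hγδ : 1 / γ + 1 / δ = 1) :
    ∑ j ∈ Finset.Icc ((a : ℤ) + m) b, |nabla^[p] f j| ^ δ ≤
      (1 / Real.Gamma (μ - p) ^ δ) *
        (∑ j ∈ Finset.Icc ((a : ℤ) + m) b,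
          (∑ τ ∈ Finset.Icc ((a : ℤ) + 1) j,
            risingFac ((j - τ + 1 : ℤ) : ℝ) (μ - p - 1) ^ γ) ^ (δ / γ)) *
        (∑ τ ∈ Finset.Icc ((a : ℤ) + 1) b,
          |caputoNabla μ ((a : ℤ) + 1) f τ| ^ δ) := by
  subst hm
  set c : ℤ := (a : ℤ) + 1 with hc
  set g : ℤ → ℝ := caputoNabla μ c f with hg
  have hμm : μ < ⌈μ⌉₊ := lt_of_le_of_ne (Nat.le_ceil μ) (by exact_mod_cast hμint ⌈μ⌉₊)
  have hμp : 0 < μ - (p : ℝ) := by linarith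
  have hΓ : 0 < Real.Gamma (μ - p) := Real.Gamma_pos_of_pos hμp
  have hcon : Real.HolderConjugate γ δ := Real.holderConjugate_iff.mpr ⟨hγ, by simpa [one_div] using hγδ⟩
  have hδ0 : (0:ℝ) < δ := by linarith
  have hγ0 : (0:ℝ) < γ := by linarith
  have hrep := representation μ hμ hμm p hp a f hf0
  set B : ℝ := ∑ τ ∈ Finset.Icc c b, |g τ| ^ δ with hB
  have hBnn : 0 ≤ B := Finset.sum_nonneg fun τ _ => Real.rpow_nonneg (abs_nonneg _) δ
  -- pointwise estimate
  have key : ∀ j ∈ Finset.Icc ((a : ℤ) + ⌈μ⌉₊) b, |nabla^[p] f j| ^ δ ≤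
      (1 / Real.Gamma (μ - p) ^ δ) *
        ((∑ τ ∈ Finset.Icc c j, risingFac ((j - τ + 1 : ℤ) : ℝ) (μ - p - 1) ^ γ) ^ (δ / γ)) * B := by
    intro j hj
    obtain ⟨hj1, hj2⟩ := mem_Icc.mp hj
    have hm1 : 1 ≤ ⌈μ⌉₊ := Nat.one_le_ceil_iff.mpr hμ
    have haj : (a : ℤ) ≤ j := by
      have : (1:ℤ) ≤ (⌈μ⌉₊ : ℤ) := by exact_mod_cast hm1
      omega
    set A : ℝ := ∑ τ ∈ Finset.Icc c j, risingFac ((j - τ + 1 : ℤ) : ℝ) (μ - p - 1) ^ γ with hA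
    have hAnn : 0 ≤ A := Finset.sum_nonneg fun τ hτ =>
      Real.rpow_nonneg (rf_pos hμp (mem_Icc.mp hτ).2).le γ
    set Bj : ℝ := ∑ τ ∈ Finset.Icc c j, |g τ| ^ δ with hBj
    have hBjnn : 0 ≤ Bj := Finset.sum_nonneg fun τ _ => Real.rpow_nonneg (abs_nonneg _) δ
    have hBjB : Bj ≤ B := Finset.sum_le_sum_of_subset_of_nonneg
      (Finset.Icc_subset_Icc_right hj2)
      (fun τ _ _ => Real.rpow_nonneg (abs_nonneg _) δ)
    -- step 1
    have step1 : |nabla^[p] f j| ≤ (1 / Real.Gamma (μ - p)) * (A ^ (1/γ) * Bj ^ (1/δ)) := by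
      rw [hrep j haj]
      unfold fracSum
      calc |∑ τ ∈ Finset.Icc c j,
              risingFac ((j - τ + 1 : ℤ) : ℝ) (μ - p - 1) / Real.Gamma (μ - p) * g τ|
          ≤ ∑ τ ∈ Finset.Icc c j,
              |risingFac ((j - τ + 1 : ℤ) : ℝ) (μ - p - 1) / Real.Gamma (μ - p) * g τ| :=
            Finset.abs_sum_le_sum_abs _ _
        _ = (1 / Real.Gamma (μ - p)) * ∑ τ ∈ Finset.Icc c j,
              risingFac ((j - τ + 1 : ℤ) : ℝ) (μ - p - 1) * |g τ| := by
            rw [Finset.mul_sum]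
            refine sum_congr rfl fun τ hτ => ?_
            have hrf := rf_pos hμp (mem_Icc.mp hτ).2 (ν := μ - p)
            rw [abs_mul, abs_div, abs_of_pos hrf, abs_of_pos hΓ]
            ring
        _ ≤ (1 / Real.Gamma (μ - p)) * (A ^ (1/γ) * Bj ^ (1/δ)) := by
            apply mul_le_mul_of_nonneg_left _ (by positivity)
            exact Real.inner_le_Lp_mul_Lq_of_nonneg (s := Finset.Icc c j) hcon
              (fun τ hτ => (rf_pos hμp (mem_Icc.mp hτ).2).le)
              (fun τ _ => abs_nonneg _)
    -- step 2
    calc |nabla^[p] f j| ^ δ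
        ≤ ((1 / Real.Gamma (μ - p)) * (A ^ (1/γ) * Bj ^ (1/δ))) ^ δ :=
          Real.rpow_le_rpow (abs_nonneg _) step1 hδ0.le
      _ = (1 / Real.Gamma (μ - p)) ^ δ * ((A ^ (1/γ)) ^ δ * (Bj ^ (1/δ)) ^ δ) := by
          rw [Real.mul_rpow (by positivity) (by positivity),
            Real.mul_rpow (by positivity) (by positivity)]
      _ = (1 / Real.Gamma (μ - p) ^ δ) * (A ^ (δ/γ) * Bj) := by
          have e1 : (1 / Real.Gamma (μ - p)) ^ δ = 1 / Real.Gamma (μ - p) ^ δ := by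
            rw [one_div, one_div, Real.inv_rpow hΓ.le]
          have e2 : (A ^ (1/γ)) ^ δ = A ^ (δ/γ) := by
            rw [← Real.rpow_mul hAnn]; congr 1; field_simp
          have e3 : (Bj ^ (1/δ)) ^ δ = Bj := by
            rw [← Real.rpow_mul hBjnn, one_div, inv_mul_cancel₀ (ne_of_gt hδ0), Real.rpow_one]
          rw [e1, e2, e3]
      _ ≤ (1 / Real.Gamma (μ - p) ^ δ) * A ^ (δ/γ) * B := by
          rw [mul_assoc]
          apply mul_le_mul_of_nonneg_left _ (by positivity)
          exact mul_le_mul_of_nonneg_left hBjB (Real.rpow_nonneg hAnn _)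
  calc ∑ j ∈ Finset.Icc ((a : ℤ) + ⌈μ⌉₊) b, |nabla^[p] f j| ^ δ
      ≤ ∑ j ∈ Finset.Icc ((a : ℤ) + ⌈μ⌉₊) b,
          (1 / Real.Gamma (μ - p) ^ δ) *
            ((∑ τ ∈ Finset.Icc c j, risingFac ((j - τ + 1 : ℤ) : ℝ) (μ - p - 1) ^ γ) ^ (δ / γ)) * B :=
        Finset.sum_le_sum key
    _ = _ := by
        rw [← Finset.sum_mul, ← Finset.mul_sum]
end

section
/- (Discrete nabla fractional Sobolev inequality.) Let μ > 0 be non-integer with m = ⌈μ⌉, let p ∈ ℤ₊ with μ > p, and let a ∈ ℤ₊. Let b ∈ ℕ with a + m < b, and let f : [a−m+1, ..., b] → ℝ with ∇^k f(a) = 0 for k = p, ..., m−1. Let γ, δ > 1 with 1/γ + 1/δ = 1, and let r ≥ 1. Then ( Σ_{j=a+m}^{b} |∇^p f(j)|^r )^{1/r} ≤ (1/Γ(μ−p)) · [ Σ_{j=a+m}^{b} ( Σ_{τ=a+1}^{j} ( (j−τ+1)^{↑(μ−p−1)} )^γ )^{r/γ} ]^{1/r} · ( Σ_{τ=a+1}^{b}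 |∇_{(a+1)*}^{μ} f(τ)|^δ )^{1/δ}. -/
open Finset

/-- Normalized rising-factorial coefficient `Γ(n+ν)/(n! Γ(ν))`. -/
noncomputable def cc (ν : ℝ) (n : ℕ) : ℝ :=
  Real.Gamma (n + ν) / (n.factorial * Real.Gamma ν)

lemma cc_zero (ν : ℝ) (hν : 0 < ν) : cc ν 0 = 1 := by
  unfold cc
  rw [Nat.factorial_zero]
  push_cast
  rw [zero_add, one_mul, div_self (Real.Gamma_pos_of_pos hν).ne']

lemma cc_nonneg (ν : ℝ) (hν : 0 < ν) (n : ℕ) : 0 ≤ cc ν n := by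
  unfold cc
  have h1 : (0:ℝ) < n + ν := by positivity
  positivity

lemma cc_succ (ν : ℝ) (hν : 0 < ν) (n : ℕ) :
    ((n:ℝ)+1) * cc ν (n+1) = ((n:ℝ) + ν) * cc ν n := by
  unfold cc
  have h1 : (0:ℝ) < n + ν := by positivity
  have h2 : Real.Gamma ((n:ℝ) + 1 + ν) = ((n:ℝ) + ν) * Real.Gamma ((n:ℝ) + ν) := by
    rw [show (n:ℝ) + 1 + ν = ((n:ℝ) + ν) + 1 by ring, Real.Gamma_add_one h1.ne']
  rw [Nat.factorial_succ]
  push_cast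
  rw [h2]
  have h3 : (n.factorial : ℝ) ≠ 0 := Nat.cast_ne_zero.mpr n.factorial_ne_zero
  have h4 : Real.Gamma ν ≠ 0 := (Real.Gamma_pos_of_pos hν).ne'
  field_simp

/-- Chu–Vandermonde convolution for the coefficients `cc`. -/
lemma cc_vand (ν η : ℝ) (hν : 0 < ν) (hη : 0 < η) (n : ℕ) :
    ∑ i ∈ Finset.range (n+1), cc ν i * cc η (n-i) = cc (ν+η) n := by
  have hνη : (0:ℝ) < ν + η := by positivity
  induction n with
  | zero => simp [cc_zero ν hν, cc_zero η hη, cc_zero _ hνη]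
  | succ n ih =>
    have hne : ((n:ℝ) + 1) ≠ 0 := by positivity
    have key : ((n:ℝ)+1) * (∑ i ∈ Finset.range (n+2), cc ν i * cc η (n+1-i))
        = ((n:ℝ) + (ν+η)) * (∑ i ∈ Finset.range (n+1), cc ν i * cc η (n-i)) := by
      rw [Finset.mul_sum]
      have split : ∀ i ∈ Finset.range (n+2),
          ((n:ℝ)+1) * (cc ν i * cc η (n+1-i)) =
            ((i:ℝ) * cc ν i) * cc η (n+1-i)
              + cc ν i * ((((n+1-i : ℕ)):ℝ) * cc η (n+1-i)) := by
        intro i hi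
        have hc : ((n+1-i : ℕ) : ℝ) = (n:ℝ) + 1 - (i:ℝ) := by
          have := Finset.mem_range.mp hi
          push_cast [Nat.cast_sub (by omega : i ≤ n+1)]
          ring
        rw [hc]; ring
      rw [Finset.sum_congr rfl split, Finset.sum_add_distrib]
      have eA : (∑ i ∈ Finset.range (n+2), ((i:ℝ) * cc ν i) * cc η (n+1-i))
          = ∑ i ∈ Finset.range (n+1), ((i:ℝ) + ν) * (cc ν i * cc η (n-i)) := by
        rw [Finset.sum_range_succ']
        simp only [Nat.cast_zero, zero_mul, add_zero]
        refine Finset.sum_congr rfl fun i hi => ?_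
        have h2 : n + 1 - (i+1) = n - i := by omega
        rw [h2]
        push_cast
        rw [cc_succ ν hν i]
        ring
      have eB : (∑ i ∈ Finset.range (n+2), cc ν i * ((((n+1-i : ℕ)):ℝ) * cc η (n+1-i)))
          = ∑ i ∈ Finset.range (n+1), ((((n-i:ℕ)):ℝ) + η) * (cc ν i * cc η (n-i)) := by
        rw [Finset.sum_range_succ]
        simp only [Nat.sub_self, Nat.cast_zero, zero_mul, mul_zero, add_zero]
        refine Finset.sum_congr rfl fun i hi => ?_
        have h2 : n + 1 - i = (n-i)+1 := by
          have := Finset.mem_range.mp hi; omega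
        rw [h2]
        push_cast
        rw [cc_succ η hη (n-i)]
        ring
      rw [eA, eB, ← Finset.sum_add_distrib, Finset.mul_sum]
      refine Finset.sum_congr rfl fun i hi => ?_
      have hc : ((n-i:ℕ):ℝ) = (n:ℝ) - (i:ℝ) := by
        have := Finset.mem_range.mp hi
        push_cast [Nat.cast_sub (by omega : i ≤ n)]
        ring
      rw [hc]; ring
    have hcs := cc_succ (ν+η) hνη n
    rw [ih] at key
    have : ((n:ℝ)+1) * (∑ i ∈ Finset.range (n+2), cc ν i * cc η (n+1-i))
        = ((n:ℝ)+1) * cc (ν+η) (n+1) := by rw [key, hcs]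
    exact mul_left_cancel₀ hne this

lemma cc_nat (q n : ℕ) : cc ((q:ℝ)+1) n = ((n+q).choose q : ℝ) := by
  unfold cc
  have h1 : (n:ℝ) + ((q:ℝ)+1) = ((n+q : ℕ):ℝ) + 1 := by push_cast; ring
  have h2 : ((q:ℝ)+1) = ((q:ℕ):ℝ) + 1 := by norm_num
  rw [h1, Real.Gamma_nat_eq_factorial, h2, Real.Gamma_nat_eq_factorial]
  rw [Nat.cast_choose ℝ (by omega : q ≤ n + q), show n + q - q = n by omega]
  rw [mul_comm]

/-- Discrete Taylor formula with vanishing lower-order differences at the base point. -/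
lemma taylor_zero (q : ℕ) : ∀ (h : ℤ → ℝ) (a : ℤ),
    (∀ k ≤ q, nabla^[k] h a = 0) → ∀ n : ℕ,
    ∑ i ∈ Finset.range n, (((n - 1 - i + q).choose q : ℕ) : ℝ) * nabla^[q+1] h (a+1+i)
      = h (a + n) := by
  induction q with
  | zero =>
    intro h a h0 n
    induction n with
    | zero => simpa using (h0 0 le_rfl).symm
    | succ n ihn =>
      rw [Finset.sum_range_succ]
      simp only [Nat.choose_zero_right, Nat.cast_one, one_mul]
      simp only [Nat.choose_zero_right, Nat.cast_one, one_mul] at ihn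
      rw [ihn]
      simp only [zero_add, Function.iterate_one, nabla]
      push_cast
      rw [show a + 1 + (n:ℤ) - 1 = a + n by ring]
      ring
  | succ q ihq =>
    intro h a h0 n
    induction n with
    | zero => simpa using (h0 0 (by omega)).symm
    | succ n ihn =>
      rw [Finset.sum_range_succ]
      rw [show (nabla^[q+1+1] h) = nabla^[q+1] (nabla h) from
        Function.iterate_succ_apply nabla (q+1) h] at ihn ⊢
      have pascal : ∀ i ∈ Finset.range n,
          (((n + 1 - 1 - i + (q+1)).choose (q+1) : ℕ) : ℝ) * nabla^[q+1] (nabla h) (a+1+i)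
            = (((n - 1 - i + (q+1)).choose (q+1) : ℕ) : ℝ) * nabla^[q+1] (nabla h) (a+1+i)
              + (((n + 1 - 1 - i + q).choose q : ℕ) : ℝ) * nabla^[q+1] (nabla h) (a+1+i) := by
        intro i hi
        have hin := Finset.mem_range.mp hi
        have e : (n + 1 - 1 - i + (q+1)).choose (q+1)
            = (n - 1 - i + (q+1)).choose (q+1) + (n + 1 - 1 - i + q).choose q := by
          rw [show n + 1 - 1 - i + (q+1) = (n - i + q) + 1 by omega,
            Nat.choose_succ_succ,
            show n - 1 - i + (q+1) = n - i + q by omega,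
            show n + 1 - 1 - i + q = n - i + q by omega]
          ring
        rw [e]
        push_cast
        ring
      rw [Finset.sum_congr rfl pascal, Finset.sum_add_distrib]
      have hq' : ∀ k ≤ q, nabla^[k] (nabla h) a = 0 := by
        intro k hk
        have := h0 (k+1) (by omega)
        rwa [Function.iterate_succ_apply] at this
      have hIH := ihq (nabla h) a hq' (n+1)
      rw [Finset.sum_range_succ] at hIH
      rw [show n+1-1-n+q = q by omega, Nat.choose_self, Nat.cast_one, one_mul] at hIH
      rw [show n+1-1-n+(q+1) = q+1 by omega, Nat.choose_self, Nat.cast_one, one_mul]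
      rw [ihn, add_assoc, hIH]
      simp only [nabla]
      push_cast
      rw [show a + ((n:ℤ) + 1) - 1 = a + n by ring]
      ring

lemma sum_Icc_int (A B : ℤ) (f : ℤ → ℝ) :
    ∑ t ∈ Finset.Icc A B, f t = ∑ i ∈ Finset.range (B + 1 - A).toNat, f (A + i) := by
  refine Finset.sum_nbij' (fun t => (t - A).toNat) (fun i => A + (i : ℤ)) ?_ ?_ ?_ ?_ ?_
  · intro t ht
    simp only [Finset.mem_Icc] at ht
    simp only [Finset.mem_range]
    omega
  · intro i hi
    simp only [Finset.mem_range] at hi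
    simp only [Finset.mem_Icc]
    omega
  · intro t ht
    simp only [Finset.mem_Icc] at ht
    omega
  · intro i hi
    simp only [Finset.mem_range] at hi
    omega
  · intro t ht
    simp only [Finset.mem_Icc] at ht
    congr 1
    omega

lemma risingFac_div (ν : ℝ) (n : ℕ) :
    risingFac ((n:ℝ) + 1) (ν - 1) / Real.Gamma ν = cc ν n := by
  unfold risingFac cc
  rw [show (n:ℝ) + 1 + (ν - 1) = n + ν by ring, Real.Gamma_nat_eq_factorial, div_div]

lemma risingFac_nonneg (ν : ℝ) (hν : 0 < ν) (x : ℤ) (hx : 0 ≤ x) :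
    0 ≤ risingFac ((x + 1 : ℤ) : ℝ) (ν - 1) := by
  have c : ((x + 1 : ℤ) : ℝ) = ((x.toNat : ℕ) : ℝ) + 1 := by
    exact_mod_cast (by omega : (x + 1 : ℤ) = ((x.toNat : ℕ) : ℤ) + 1)
  rw [c]
  unfold risingFac
  have h0 : (0:ℝ) ≤ (x.toNat : ℝ) := Nat.cast_nonneg _
  have h1 : (0:ℝ) < (x.toNat : ℝ) + 1 + (ν - 1) := by linarith
  have h2 : (0:ℝ) < (x.toNat : ℝ) + 1 := by linarith
  exact div_nonneg (Real.Gamma_pos_of_pos h1).le (Real.Gamma_pos_of_pos h2).le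

/-- Key representation: the `p`-th difference as a fractional sum of the Caputo difference. -/
lemma representation_s13 (μ : ℝ) (m p : ℕ) (hm : m = ⌈μ⌉₊)
    (hp : (p:ℝ) < μ) (hμm : μ < m) (A : ℤ) (f : ℤ → ℝ)
    (hf0 : ∀ k, p ≤ k → k ≤ m - 1 → nabla^[k] f A = 0)
    (j : ℤ) (hj : A ≤ j) :
    ∑ τ ∈ Finset.Icc (A+1) j,
      risingFac ((j - τ + 1 : ℤ) : ℝ) (μ - ↑p - 1) / Real.Gamma (μ - ↑p)
        * caputoNabla μ (A+1) f τ
      = nabla^[p] f j := by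
  have hν : (0:ℝ) < μ - ↑p := by linarith
  have hη : (0:ℝ) < ↑m - μ := by linarith
  have hpm : p < m := by exact_mod_cast hp.trans hμm
  simp only [caputoNabla, fracSum, ← hm, Finset.mul_sum]
  rw [Finset.sum_comm' (t' := Finset.Icc (A+1) j) (s' := fun s => Finset.Icc s j)
    (fun τ s => by simp only [Finset.mem_Icc]; omega)]
  have step1 : ∀ s ∈ Finset.Icc (A+1) j,
      ∑ τ ∈ Finset.Icc s j,
        risingFac ((j - τ + 1 : ℤ) : ℝ) (μ - ↑p - 1) / Real.Gamma (μ - ↑p)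
          * (risingFac ((τ - s + 1 : ℤ) : ℝ) (↑m - μ - 1) / Real.Gamma (↑m - μ)
            * nabla^[m] f s)
      = cc ((↑m - μ) + (μ - ↑p)) ((j - s).toNat) * nabla^[m] f s := by
    intro s hs
    rw [Finset.mem_Icc] at hs
    rw [sum_Icc_int s j, show (j + 1 - s).toNat = (j - s).toNat + 1 by omega]
    rw [← cc_vand (↑m - μ) (μ - ↑p) hη hν ((j - s).toNat), Finset.sum_mul]
    refine Finset.sum_congr rfl fun i hi => ?_
    rw [Finset.mem_range] at hi
    have c1 : ((j - (s + (i:ℤ)) + 1 : ℤ) : ℝ) = (((j - s).toNat - i : ℕ) : ℝ) + 1 := by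
      exact_mod_cast (by omega : (j - (s + (i:ℤ)) + 1 : ℤ) = (((j - s).toNat - i : ℕ) : ℤ) + 1)
    have c2 : ((s + (i:ℤ) - s + 1 : ℤ) : ℝ) = ((i : ℕ) : ℝ) + 1 := by
      exact_mod_cast (by omega : (s + (i:ℤ) - s + 1 : ℤ) = ((i : ℕ) : ℤ) + 1)
    rw [c1, c2, risingFac_div, risingFac_div]
    ring
  rw [Finset.sum_congr rfl step1]
  set q' : ℕ := m - p - 1 with hq'
  have hcast : ((↑m - μ) + (μ - ↑p) : ℝ) = (q' : ℝ) + 1 := by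
    have h1 : (q' + 1 : ℕ) = m - p := by omega
    have h2 : ((q' : ℝ) + 1) = ((q' + 1 : ℕ) : ℝ) := by push_cast; ring
    rw [h2, h1, Nat.cast_sub hpm.le]
    ring
  have hiter : nabla^[m] f = nabla^[q'+1] (nabla^[p] f) := by
    rw [show m = q' + 1 + p by omega]
    exact Function.iterate_add_apply nabla (q'+1) p f
  have hyp' : ∀ k ≤ q', nabla^[k] (nabla^[p] f) A = 0 := by
    intro k hk
    rw [← Function.iterate_add_apply]
    exact hf0 (k+p) (by omega) (by omega)
  have TT := taylor_zero q' (nabla^[p] f) A hyp' ((j - A).toNat)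
  rw [show A + (((j - A).toNat : ℕ) : ℤ) = j by omega] at TT
  rw [sum_Icc_int (A+1) j, show (j + 1 - (A+1)).toNat = (j - A).toNat by omega]
  rw [← TT]
  refine Finset.sum_congr rfl fun i hi => ?_
  rw [Finset.mem_range] at hi
  rw [hcast, cc_nat q' ((j - (A + 1 + (i:ℤ))).toNat),
    show (j - (A + 1 + (i:ℤ))).toNat + q' = (j - A).toNat - 1 - i + q' by omega,
    hiter]

/-- Discrete nabla fractional Sobolev inequality. -/
theorem discrete_nabla_fractional_sobolev
    (μ : ℝ) (hμ : 0 < μ) (hμint : ∀ n : ℤ, μ ≠ n)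
    (m : ℕ) (hm : m = ⌈μ⌉₊)
    (p : ℕ) (hp : (p : ℝ) < μ) (a : ℕ)
    (b : ℤ) (hb : (a : ℤ) + m < b)
    (f : ℤ → ℝ)
    (hf0 : ∀ k, p ≤ k → k ≤ m - 1 → nabla^[k] f a = 0)
    (γ δ : ℝ) (hγ : 1 < γ) (hδ : 1 < δ) (hγδ : 1 / γ + 1 / δ = 1)
    (r : ℝ) (hr : 1 ≤ r) :
    (∑ j ∈ Finset.Icc ((a : ℤ) + m) b, |nabla^[p] f j| ^ r) ^ (1 / r) ≤
      (1 / Real.Gamma (μ - p)) *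
        (∑ j ∈ Finset.Icc ((a : ℤ) + m) b,
          (∑ τ ∈ Finset.Icc ((a : ℤ) + 1) j,
            risingFac ((j - τ + 1 : ℤ) : ℝ) (μ - p - 1) ^ γ) ^ (r / γ)) ^ (1 / r) *
        (∑ τ ∈ Finset.Icc ((a : ℤ) + 1) b,
          |caputoNabla μ ((a : ℤ) + 1) f τ| ^ δ) ^ (1 / δ) := by
  have hν : (0:ℝ) < μ - ↑p := by linarith
  have hΓ : 0 < Real.Gamma (μ - ↑p) := Real.Gamma_pos_of_pos hν
  have hμm : μ < (m:ℝ) := by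
    rw [hm]
    refine lt_of_le_of_ne (Nat.le_ceil μ) fun h => ?_
    exact hμint (⌈μ⌉₊ : ℤ) (by exact_mod_cast h)
  have hr0 : (0:ℝ) < r := by linarith
  have hγ0 : (0:ℝ) < γ := by linarith
  have hδ0 : (0:ℝ) < δ := by linarith
  have hconj : Real.HolderConjugate γ δ := by
    simpa using Real.holderConjugate_one_div (one_div_pos.mpr hγ0) (one_div_pos.mpr hδ0) hγδ
  set A : ℤ := (a : ℤ) with hA
  -- abbreviations
  set D : ℝ := (∑ τ ∈ Finset.Icc (A + 1) b,
      |caputoNabla μ (A + 1) f τ| ^ δ) ^ (1 / δ) with hD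
  have hDb : (0:ℝ) ≤ ∑ τ ∈ Finset.Icc (A + 1) b, |caputoNabla μ (A + 1) f τ| ^ δ :=
    Finset.sum_nonneg fun τ _ => Real.rpow_nonneg (abs_nonneg _) δ
  have hD0 : 0 ≤ D := Real.rpow_nonneg hDb _
  have hSnn : ∀ j : ℤ, (0:ℝ) ≤ ∑ τ ∈ Finset.Icc (A + 1) j,
      risingFac ((j - τ + 1 : ℤ) : ℝ) (μ - ↑p - 1) ^ γ := by
    intro j
    refine Finset.sum_nonneg fun τ hτ => ?_
    rw [Finset.mem_Icc] at hτ
    exact Real.rpow_nonneg (risingFac_nonneg _ hν _ (by omega)) γ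
  -- pointwise bound
  have ptwise : ∀ j ∈ Finset.Icc (A + (m:ℤ)) b,
      |nabla^[p] f j| ≤ (1 / Real.Gamma (μ - ↑p)) *
        ((∑ τ ∈ Finset.Icc (A + 1) j,
            risingFac ((j - τ + 1 : ℤ) : ℝ) (μ - ↑p - 1) ^ γ) ^ (1/γ) * D) := by
    intro j hj
    rw [Finset.mem_Icc] at hj
    rw [← representation_s13 μ m p hm hp hμm A f hf0 j (by omega)]
    have hRnn : ∀ τ ∈ Finset.Icc (A + 1) j,
        0 ≤ risingFac ((j - τ + 1 : ℤ) : ℝ) (μ - ↑p - 1) := by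
      intro τ hτ
      rw [Finset.mem_Icc] at hτ
      exact risingFac_nonneg _ hν _ (by omega)
    calc |∑ τ ∈ Finset.Icc (A+1) j,
            risingFac ((j - τ + 1 : ℤ) : ℝ) (μ - ↑p - 1) / Real.Gamma (μ - ↑p)
              * caputoNabla μ (A+1) f τ|
        ≤ ∑ τ ∈ Finset.Icc (A+1) j,
            |risingFac ((j - τ + 1 : ℤ) : ℝ) (μ - ↑p - 1) / Real.Gamma (μ - ↑p)
              * caputoNabla μ (A+1) f τ| := Finset.abs_sum_le_sum_abs _ _
      _ = (1 / Real.Gamma (μ - ↑p)) * ∑ τ ∈ Finset.Icc (A+1) j,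
            risingFac ((j - τ + 1 : ℤ) : ℝ) (μ - ↑p - 1) * |caputoNabla μ (A+1) f τ| := by
          rw [Finset.mul_sum]
          refine Finset.sum_congr rfl fun τ hτ => ?_
          rw [abs_mul, abs_of_nonneg (div_nonneg (hRnn τ hτ) hΓ.le)]
          ring
      _ ≤ (1 / Real.Gamma (μ - ↑p)) *
            ((∑ τ ∈ Finset.Icc (A+1) j,
              risingFac ((j - τ + 1 : ℤ) : ℝ) (μ - ↑p - 1) ^ γ) ^ (1/γ) *
             (∑ τ ∈ Finset.Icc (A+1) j, |caputoNabla μ (A+1) f τ| ^ δ) ^ (1/δ)) := by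
          refine mul_le_mul_of_nonneg_left ?_ (by positivity)
          exact Real.inner_le_Lp_mul_Lq_of_nonneg (s := Finset.Icc (A+1) j)
            (f := fun τ => risingFac ((j - τ + 1 : ℤ) : ℝ) (μ - ↑p - 1))
            (g := fun τ => |caputoNabla μ (A+1) f τ|)
            hconj hRnn (fun τ _ => abs_nonneg _)
      _ ≤ (1 / Real.Gamma (μ - ↑p)) *
            ((∑ τ ∈ Finset.Icc (A+1) j,
              risingFac ((j - τ + 1 : ℤ) : ℝ) (μ - ↑p - 1) ^ γ) ^ (1/γ) * D) := by
          refine mul_le_mul_of_nonneg_left ?_ (by positivity)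
          refine mul_le_mul_of_nonneg_left ?_ (Real.rpow_nonneg (hSnn j) _)
          refine Real.rpow_le_rpow (Finset.sum_nonneg fun τ _ =>
            Real.rpow_nonneg (abs_nonneg _) δ) ?_ (by positivity)
          refine Finset.sum_le_sum_of_subset_of_nonneg
            (Finset.Icc_subset_Icc_right hj.2) fun τ _ _ =>
            Real.rpow_nonneg (abs_nonneg _) δ
  -- sum up
  have sumbound : (∑ j ∈ Finset.Icc (A + (m:ℤ)) b, |nabla^[p] f j| ^ r)
      ≤ ∑ j ∈ Finset.Icc (A + (m:ℤ)) b,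
          ((1 / Real.Gamma (μ - ↑p)) *
            ((∑ τ ∈ Finset.Icc (A + 1) j,
              risingFac ((j - τ + 1 : ℤ) : ℝ) (μ - ↑p - 1) ^ γ) ^ (1/γ) * D)) ^ r := by
    refine Finset.sum_le_sum fun j hj => ?_
    exact Real.rpow_le_rpow (abs_nonneg _) (ptwise j hj) hr0.le
  have hterm : ∀ j ∈ Finset.Icc (A + (m:ℤ)) b,
      ((1 / Real.Gamma (μ - ↑p)) *
        ((∑ τ ∈ Finset.Icc (A + 1) j,
          risingFac ((j - τ + 1 : ℤ) : ℝ) (μ - ↑p - 1) ^ γ) ^ (1/γ) * D)) ^ r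
      = ((1 / Real.Gamma (μ - ↑p)) * D) ^ r *
          (∑ τ ∈ Finset.Icc (A + 1) j,
            risingFac ((j - τ + 1 : ℤ) : ℝ) (μ - ↑p - 1) ^ γ) ^ (r/γ) := by
    intro j hj
    rw [show (1 / Real.Gamma (μ - ↑p)) *
        ((∑ τ ∈ Finset.Icc (A + 1) j,
          risingFac ((j - τ + 1 : ℤ) : ℝ) (μ - ↑p - 1) ^ γ) ^ (1/γ) * D)
      = ((1 / Real.Gamma (μ - ↑p)) * D) *
        (∑ τ ∈ Finset.Icc (A + 1) j,
          risingFac ((j - τ + 1 : ℤ) : ℝ) (μ - ↑p - 1) ^ γ) ^ (1/γ) by ring]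
    rw [Real.mul_rpow (by positivity) (Real.rpow_nonneg (hSnn j) _)]
    rw [← Real.rpow_mul (hSnn j)]
    rw [show 1/γ*r = r/γ by ring]
  calc (∑ j ∈ Finset.Icc (A + (m:ℤ)) b, |nabla^[p] f j| ^ r) ^ (1 / r)
      ≤ (∑ j ∈ Finset.Icc (A + (m:ℤ)) b,
          ((1 / Real.Gamma (μ - ↑p)) *
            ((∑ τ ∈ Finset.Icc (A + 1) j,
              risingFac ((j - τ + 1 : ℤ) : ℝ) (μ - ↑p - 1) ^ γ) ^ (1/γ) * D)) ^ r) ^ (1/r) := by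
        refine Real.rpow_le_rpow (Finset.sum_nonneg fun j _ =>
          Real.rpow_nonneg (abs_nonneg _) r) sumbound (by positivity)
    _ = (((1 / Real.Gamma (μ - ↑p)) * D) ^ r *
          ∑ j ∈ Finset.Icc (A + (m:ℤ)) b,
            (∑ τ ∈ Finset.Icc (A + 1) j,
              risingFac ((j - τ + 1 : ℤ) : ℝ) (μ - ↑p - 1) ^ γ) ^ (r/γ)) ^ (1/r) := by
        rw [Finset.sum_congr rfl hterm, ← Finset.mul_sum]
    _ = (1 / Real.Gamma (μ - ↑p)) *
          (∑ j ∈ Finset.Icc (A + (m:ℤ)) b,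
            (∑ τ ∈ Finset.Icc (A + 1) j,
              risingFac ((j - τ + 1 : ℤ) : ℝ) (μ - ↑p - 1) ^ γ) ^ (r/γ)) ^ (1/r) * D := by
        have hT : (0:ℝ) ≤ ∑ j ∈ Finset.Icc (A + (m:ℤ)) b,
            (∑ τ ∈ Finset.Icc (A + 1) j,
              risingFac ((j - τ + 1 : ℤ) : ℝ) (μ - ↑p - 1) ^ γ) ^ (r/γ) :=
          Finset.sum_nonneg fun j _ => Real.rpow_nonneg (hSnn j) _
        rw [Real.mul_rpow (Real.rpow_nonneg (by positivity) r) hT]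
        rw [← Real.rpow_mul (by positivity : (0:ℝ) ≤ 1 / Real.Gamma (μ - ↑p) * D)]
        rw [mul_one_div_cancel hr0.ne', Real.rpow_one]
        ring
end
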